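/- (Robustness of TSAC, Theorem 1.) Let p ∈ ℝ^N be a probability vector and m = N/2 = 2^{n−1}. If e^{−ε}·p_{m−1} < e^{ε}·p_m (i.e., the polarization of the first computation qubit is below the heat-bath algorithmic cooling limit), then one iteration of TSAC strictly increases the polarization of the first qubit: ∑_{k=0}^{m−1} (Tp)_k > ∑_{k=0}^{m−1} p_k. -/

import Mathlib

open Real Matrix Finset

/-- The TSAC transition matrix `T` on the diagonal of the computation-qubit density
matrix: `N = 2^n`, `z = e^ε + e^{-ε}`, `T 0 0 = T 0 1 = e^ε/z`,
`T (N-1) (N-2) = T (N-1) (N-1) = e^{-ε}/z`, and for `0 < i < N-1`,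
`T i (i-1) = e^{-ε}/z`, `T i (i+1) = e^ε/z`; all other entries vanish. -/
noncomputable def Tmat (n : ℕ) (ε : ℝ) : Matrix (Fin (2 ^ n)) (Fin (2 ^ n)) ℝ :=
  fun i j =>
    if (i : ℕ) = 0 then
      if (j : ℕ) ≤ 1 then Real.exp ε / (Real.exp ε + Real.exp (-ε)) else 0
    else if (i : ℕ) = 2 ^ n - 1 then
      if 2 ^ n - 2 ≤ (j : ℕ) then Real.exp (-ε) / (Real.exp ε + Real.exp (-ε)) else 0
    else if (j : ℕ) + 1 = (i : ℕ) then Real.exp (-ε) / (Real.exp ε + Real.exp (-ε))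
    else if (j : ℕ) = (i : ℕ) + 1 then Real.exp ε / (Real.exp ε + Real.exp (-ε))
    else 0

/-- Robustness of TSAC (Theorem 1): if `p` is a probability vector whose first-qubit
polarization is below the HBAC limit, i.e. `e^{-ε} p_{m-1} < e^{ε} p_m` with
`m = N/2 = 2^{n-1}`, then one iteration of TSAC strictly increases the polarization
of the first qubit: `∑_{k<m} (Tp)_k > ∑_{k<m} p_k`. -/
theorem tsac_robust_cooling (n : ℕ) (hn : 1 ≤ n) (ε : ℝ) (hε : 0 < ε)
    (p : Fin (2 ^ n) → ℝ) (hp : ∀ k, 0 ≤ p k) (hp1 : ∑ k, p k = 1) :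
    ∀ (hm : 2 ^ (n - 1) < 2 ^ n) (hm' : 2 ^ (n - 1) - 1 < 2 ^ n),
      Real.exp (-ε) * p ⟨2 ^ (n - 1) - 1, hm'⟩ < Real.exp ε * p ⟨2 ^ (n - 1), hm⟩ →
      (∑ k : Fin (2 ^ n), if (k : ℕ) < 2 ^ (n - 1) then (Tmat n ε).mulVec p k else 0) >
        (∑ k : Fin (2 ^ n), if (k : ℕ) < 2 ^ (n - 1) then p k else 0) := by
  intro hm hm' hlt
  set m := 2 ^ (n - 1) with hmdef
  have hNm : 2 ^ n = 2 * m := by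
    rw [hmdef]
    cases n with
    | zero => omega
    | succ k => simp [pow_succ]; ring
  have hm1 : 1 ≤ m := Nat.one_le_two_pow
  have hN2 : 2 ≤ 2 ^ n := by omega
  set z := Real.exp ε + Real.exp (-ε) with hzdef
  have hz : 0 < z := by positivity
  set a := Real.exp ε / z with hadef
  set b := Real.exp (-ε) / z with hbdef
  have hab : a + b = 1 := by
    rw [hadef, hbdef, ← add_div, div_self hz.ne']
  set q : ℕ → ℝ := fun j => if h : j < 2 ^ n then p ⟨j, h⟩ else 0 with hqdef
  have h0N : (0 : ℕ) < 2 ^ n := by omega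
  have h1N : (1 : ℕ) < 2 ^ n := by omega
  have hrow0 : (Tmat n ε).mulVec p ⟨0, h0N⟩ = a * q 0 + a * q 1 := by
    have hpt : ∀ j : Fin (2 ^ n),
        Tmat n ε ⟨0, h0N⟩ j * p j =
          (if j = (⟨0, h0N⟩ : Fin (2 ^ n)) then a * p j else 0) +
          (if j = (⟨1, h1N⟩ : Fin (2 ^ n)) then a * p j else 0) := by
      intro j
      simp only [Tmat, Fin.ext_iff]
      by_cases hj0 : (j : ℕ) = 0
      · simp [hj0]; exact Or.inl rfl
      · by_cases hj1 : (j : ℕ) = 1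
        · simp [hj1]; exact Or.inl rfl
        · have : ¬ (j : ℕ) ≤ 1 := by omega
          simp [hj0, hj1, this]
    simp only [Matrix.mulVec, dotProduct]
    rw [Finset.sum_congr rfl (fun j _ => hpt j), Finset.sum_add_distrib,
      Finset.sum_ite_eq' Finset.univ, Finset.sum_ite_eq' Finset.univ]
    simp [hqdef, h0N, h1N]
  have hrowk : ∀ k, 0 < k → k < m → ∀ (h : k < 2 ^ n),
      (Tmat n ε).mulVec p ⟨k, h⟩ = b * q (k - 1) + a * q (k + 1) := by
    intro k hk0 hkm h
    have hk1N : k - 1 < 2 ^ n := by omega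
    have hk2N : k + 1 < 2 ^ n := by omega
    have hkne : k ≠ 2 ^ n - 1 := by omega
    have hpt : ∀ j : Fin (2 ^ n),
        Tmat n ε ⟨k, h⟩ j * p j =
          (if j = (⟨k - 1, hk1N⟩ : Fin (2 ^ n)) then b * p j else 0) +
          (if j = (⟨k + 1, hk2N⟩ : Fin (2 ^ n)) then a * p j else 0) := by
      intro j
      simp only [Tmat, Fin.ext_iff]
      have hkne0 : ¬ (k = 0) := by omega
      have e3 : k - 1 + 1 = k := by omega
      have e4 : ¬ (k + 1 + 1 = k) := by omega
      have e5 : ¬ (k + 1 = k - 1) := by omega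
      by_cases hj1 : (j : ℕ) + 1 = k
      · have e1 : (j : ℕ) = k - 1 := by omega
        have e2 : ¬ ((j : ℕ) = k + 1) := by omega
        simp [hkne0, hkne, hj1, e1, e2, e3]; exact Or.inl rfl
      · by_cases hj2 : (j : ℕ) = k + 1
        · have e1 : ¬ ((j : ℕ) = k - 1) := by omega
          simp [hkne0, hkne, hj1, hj2, e1, e4, e5]; exact Or.inl rfl
        · have e1 : ¬ ((j : ℕ) = k - 1) := by omega
          simp [hkne0, hkne, hj1, hj2, e1]
    simp only [Matrix.mulVec, dotProduct]
    rw [Finset.sum_congr rfl (fun j _ => hpt j), Finset.sum_add_distrib,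
      Finset.sum_ite_eq' Finset.univ, Finset.sum_ite_eq' Finset.univ]
    simp [hqdef, hk1N, hk2N]
  have conv1 : ∀ f : Fin (2 ^ n) → ℝ,
      (∑ k : Fin (2 ^ n), if (k : ℕ) < m then f k else 0) =
        ∑ j ∈ Finset.range m, (if h : j < 2 ^ n then f ⟨j, h⟩ else 0) := by
    intro f
    set F : ℕ → ℝ := fun j => if h : j < 2 ^ n then f ⟨j, h⟩ else 0 with hF
    have h1 : (∑ k : Fin (2 ^ n), if (k : ℕ) < m then f k else 0) =
        ∑ k : Fin (2 ^ n), (if (k : ℕ) < m then F (k : ℕ) else 0) := by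
      refine Finset.sum_congr rfl fun k _ => ?_
      by_cases hk : (k : ℕ) < m <;> simp [hF, hk, k.isLt]
    rw [h1, Fin.sum_univ_eq_sum_range (fun j => if j < m then F j else 0) (2 ^ n)]
    rw [← Finset.sum_subset (Finset.range_subset_range.2 (show m ≤ 2 ^ n by omega))
      (fun j _ hj => if_neg (by simpa using hj))]
    exact Finset.sum_congr rfl fun j hj => if_pos (Finset.mem_range.1 hj)
  rw [conv1, conv1]
  have hq_eq : ∀ j ∈ Finset.range m, (if h : j < 2 ^ n then p ⟨j, h⟩ else 0) = q j := by
    intro j _; rfl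
  rw [Finset.sum_congr rfl hq_eq]
  set F : ℕ → ℝ := fun k => if k = 0 then 0 else a * q k - b * q (k - 1) with hFdef
  have key : ∀ j ∈ Finset.range m,
      (if h : j < 2 ^ n then (Tmat n ε).mulVec p ⟨j, h⟩ else 0) =
        q j + (F (j + 1) - F j) := by
    intro j hj
    have hjm := Finset.mem_range.1 hj
    have hjN : j < 2 ^ n := by omega
    rw [dif_pos hjN]
    rcases Nat.eq_zero_or_pos j with rfl | hj0
    · rw [hrow0]
      simp only [hFdef]
      norm_num
      linear_combination q 0 * hab
    · rw [hrowk j hj0 hjm hjN]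
      simp only [hFdef]
      have h1 : ¬ (j + 1 = 0) := by omega
      have h2 : ¬ (j = 0) := by omega
      rw [if_neg h1, if_neg h2]
      have : j + 1 - 1 = j := by omega
      rw [this]
      linear_combination q j * hab
  rw [Finset.sum_congr rfl key, Finset.sum_add_distrib, Finset.sum_range_sub F]
  have hF0 : F 0 = 0 := by simp [hFdef]
  have hFm : F m = a * q m - b * q (m - 1) := by
    rw [hFdef]; simp only [if_neg (by omega : ¬ (m = 0))]
  rw [hF0, hFm, sub_zero]
  have hqm : q m = p ⟨m, hm⟩ := by rw [hqdef]; simp [hm]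
  have hqm1 : q (m - 1) = p ⟨m - 1, hm'⟩ := by rw [hqdef]; simp [hm']
  have hpos : 0 < a * q m - b * q (m - 1) := by
    rw [hqm, hqm1, hadef, hbdef, div_mul_eq_mul_div, div_mul_eq_mul_div, ← sub_div]
    apply div_pos _ hz
    linarith
  linarith
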